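/- Let Q : ℝ^{r+1} → Matrix (Fin (N+1)) (Fin (N+1)) ℝ be a linear map such that Q x is a symmetric matrix for every x. Then the index function ind(x) = n⁻(Q x) is locally constant on the complement of the spectral variety: the restriction of x ↦ n⁻(Q x) to the open set {x ∈ ℝ^{r+1} : det(Q x) ≠ 0} is locally constant. -/

import Mathlib

open Matrix

/-- The negative index of inertia of a real symmetric matrix: the number of negative
eigenvalues counted with multiplicity. -/
noncomputable def negInertia {n : ℕ} (A : Matrix (Fin n) (Fin n) ℝ) : ℕ :=
  if h : A.IsHermitian then Fintype.card {i // h.eigenvalues i < 0} else 0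

open FiniteDimensional Submodule

section aux

variable {n : ℕ} {A : Matrix (Fin n) (Fin n) ℝ}

private lemma real_dot_eq_inner (x y : EuclideanSpace ℝ (Fin n)) :
    x ⬝ᵥ y = (inner ℝ x y : ℝ) := by
  simp [EuclideanSpace.inner_eq_star_dotProduct, dotProduct_comm]

/-- quadratic form in terms of eigen-coordinates -/
private lemma qf_eq (hA : A.IsHermitian) (v : EuclideanSpace ℝ (Fin n)) :
    v ⬝ᵥ A *ᵥ v = ∑ i, hA.eigenvalues i * (hA.eigenvectorBasis.repr v i) ^ 2 := by
  have hs : Aᵀ = A := by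
    ext i j
    have := congrFun (congrFun hA j) i
    simpa using this.symm
  have key : ∀ i, (inner ℝ (hA.eigenvectorBasis i)
      (WithLp.toLp 2 (A *ᵥ v : Fin n → ℝ) : EuclideanSpace ℝ (Fin n)) : ℝ)
      = hA.eigenvalues i * hA.eigenvectorBasis.repr v i := by
    intro i
    have h1 : ⇑(hA.eigenvectorBasis i) ⬝ᵥ A *ᵥ v = (A *ᵥ ⇑(hA.eigenvectorBasis i)) ⬝ᵥ v := by
      rw [dotProduct_mulVec, ← mulVec_transpose, hs]
    have h2 := hA.mulVec_eigenvectorBasis i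
    rw [← real_dot_eq_inner, WithLp.ofLp_toLp]
    rw [h1, h2, smul_dotProduct, smul_eq_mul, OrthonormalBasis.repr_apply_apply]
    rw [real_dot_eq_inner]
  calc v ⬝ᵥ A *ᵥ v = (inner ℝ v (WithLp.toLp 2 (A *ᵥ v : Fin n → ℝ) : EuclideanSpace ℝ (Fin n)) : ℝ) :=
        real_dot_eq_inner v (WithLp.toLp 2 (A *ᵥ v))
    _ = ∑ i, (inner ℝ v (hA.eigenvectorBasis i) : ℝ) * (inner ℝ (hA.eigenvectorBasis i)
          (WithLp.toLp 2 (A *ᵥ v : Fin n → ℝ) : EuclideanSpace ℝ (Fin n)) : ℝ) :=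
        (OrthonormalBasis.sum_inner_mul_inner _ _ _).symm
    _ = ∑ i, hA.eigenvalues i * (hA.eigenvectorBasis.repr v i) ^ 2 := by
        refine Finset.sum_congr rfl fun i _ => ?_
        rw [key i, real_inner_comm, ← OrthonormalBasis.repr_apply_apply]
        ring

private lemma repr_eq_zero_of_mem_span {E : Type*} [NormedAddCommGroup E]
    [InnerProductSpace ℝ E] {ι : Type*} [Fintype ι] (b : OrthonormalBasis ι ℝ E)
    (s : Set ι) {v : E} (hv : v ∈ Submodule.span ℝ (b '' s)) {j : ι} (hj : j ∉ s) :
    b.repr v j = 0 := by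
  rw [b.repr_apply_apply]
  induction hv using Submodule.span_induction with
  | mem x hx =>
    obtain ⟨i, his, rfl⟩ := hx
    exact b.orthonormal.2 (fun h : j = i => hj (h ▸ his))
  | zero => simp
  | add x y _ _ hx hy => simp [inner_add_right, hx, hy]
  | smul c x _ hx => simp [inner_smul_right, hx]

private lemma exists_repr_ne_zero {E : Type*} [NormedAddCommGroup E]
    [InnerProductSpace ℝ E] {ι : Type*} [Fintype ι] (b : OrthonormalBasis ι ℝ E)
    {v : E} (hv : v ≠ 0) : ∃ j, b.repr v j ≠ 0 := by
  by_contra h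
  push_neg at h
  apply hv
  have h0 : b.repr v = 0 := by
    ext j
    simpa using h j
  have := congrArg b.repr.symm h0
  simpa using this

private lemma qf_neg_on_span (hA : A.IsHermitian) {s : Set (Fin n)}
    (hs : ∀ i ∈ s, hA.eigenvalues i < 0) {v : EuclideanSpace ℝ (Fin n)}
    (hv : v ∈ Submodule.span ℝ (hA.eigenvectorBasis '' s)) (hv0 : v ≠ 0) :
    v ⬝ᵥ A *ᵥ v < 0 := by
  rw [qf_eq hA]
  obtain ⟨j, hj⟩ := exists_repr_ne_zero hA.eigenvectorBasis hv0
  have hjs : j ∈ s := by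
    by_contra hjs
    exact hj (repr_eq_zero_of_mem_span _ _ hv hjs)
  have h := Finset.sum_lt_sum (s := Finset.univ)
    (f := fun i => hA.eigenvalues i * (hA.eigenvectorBasis.repr v i) ^ 2)
    (g := fun _ => (0 : ℝ)) ?_ ?_
  · simpa using h
  · intro i _
    by_cases hi : i ∈ s
    · exact mul_nonpos_iff.mpr (Or.inr ⟨(hs i hi).le, sq_nonneg _⟩)
    · simp [repr_eq_zero_of_mem_span _ _ hv hi]
  · refine ⟨j, Finset.mem_univ j, ?_⟩
    have h1 : (0 : ℝ) < (hA.eigenvectorBasis.repr v j) ^ 2 := by positivity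
    exact mul_neg_of_neg_of_pos (hs j hjs) h1

private lemma qf_pos_on_span (hA : A.IsHermitian) {s : Set (Fin n)}
    (hs : ∀ i ∈ s, 0 < hA.eigenvalues i) {v : EuclideanSpace ℝ (Fin n)}
    (hv : v ∈ Submodule.span ℝ (hA.eigenvectorBasis '' s)) (hv0 : v ≠ 0) :
    0 < v ⬝ᵥ A *ᵥ v := by
  rw [qf_eq hA]
  obtain ⟨j, hj⟩ := exists_repr_ne_zero hA.eigenvectorBasis hv0
  have hjs : j ∈ s := by
    by_contra hjs
    exact hj (repr_eq_zero_of_mem_span _ _ hv hjs)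
  have h := Finset.sum_lt_sum (s := Finset.univ)
    (f := fun _ => (0 : ℝ))
    (g := fun i => hA.eigenvalues i * (hA.eigenvectorBasis.repr v i) ^ 2) ?_ ?_
  · simpa using h
  · intro i _
    by_cases hi : i ∈ s
    · exact mul_nonneg (hs i hi).le (sq_nonneg _)
    · simp [repr_eq_zero_of_mem_span _ _ hv hi]
  · refine ⟨j, Finset.mem_univ j, ?_⟩
    have h1 : (0 : ℝ) < (hA.eigenvectorBasis.repr v j) ^ 2 := by positivity
    exact mul_pos (hs j hjs) h1

private lemma qf_nonneg_on_span (hA : A.IsHermitian) {s : Set (Fin n)}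
    (hs : ∀ i ∈ s, 0 ≤ hA.eigenvalues i) {v : EuclideanSpace ℝ (Fin n)}
    (hv : v ∈ Submodule.span ℝ (hA.eigenvectorBasis '' s)) :
    0 ≤ v ⬝ᵥ A *ᵥ v := by
  rw [qf_eq hA]
  refine Finset.sum_nonneg fun i _ => ?_
  by_cases hi : i ∈ s
  · exact mul_nonneg (hs i hi) (sq_nonneg _)
  · simp [repr_eq_zero_of_mem_span _ _ hv hi]

private lemma qf_nonpos_on_span (hA : A.IsHermitian) {s : Set (Fin n)}
    (hs : ∀ i ∈ s, hA.eigenvalues i ≤ 0) {v : EuclideanSpace ℝ (Fin n)}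
    (hv : v ∈ Submodule.span ℝ (hA.eigenvectorBasis '' s)) :
    v ⬝ᵥ A *ᵥ v ≤ 0 := by
  rw [qf_eq hA]
  refine Finset.sum_nonpos fun i _ => ?_
  by_cases hi : i ∈ s
  · exact mul_nonpos_iff.mpr (Or.inr ⟨hs i hi, sq_nonneg _⟩)
  · simp [repr_eq_zero_of_mem_span _ _ hv hi]

private lemma finrank_span_image (b : OrthonormalBasis (Fin n) ℝ
    (EuclideanSpace ℝ (Fin n))) (p : Fin n → Prop) [DecidablePred p] :
    Module.finrank ℝ (Submodule.span ℝ (b '' {i | p i})) = Fintype.card {i // p i} := by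
  have hind : LinearIndependent ℝ (fun i : {i // p i} => b i.val) :=
    (b.orthonormal.comp Subtype.val Subtype.val_injective).linearIndependent
  have himg : b '' {i | p i} = Set.range (fun i : {i // p i} => b i.val) := by
    rw [show (fun i : {i // p i} => b i.val) = b ∘ Subtype.val from rfl,
      Set.range_comp, Subtype.range_coe_subtype]
  rw [himg, finrank_span_eq_card hind]

/-- The key counting lemma. -/
private lemma negInertia_eq_of_spans {B : Matrix (Fin n) (Fin n) ℝ} (hB : B.IsHermitian)
    (W₁ W₂ : Submodule ℝ (EuclideanSpace ℝ (Fin n)))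
    (h1 : ∀ v ∈ W₁, v ≠ 0 → v ⬝ᵥ B *ᵥ v < 0)
    (h2 : ∀ v ∈ W₂, v ≠ 0 → 0 < v ⬝ᵥ B *ᵥ v)
    (hdim : Module.finrank ℝ W₁ + Module.finrank ℝ W₂ = n) :
    negInertia B = Module.finrank ℝ W₁ := by
  classical
  have hneg : negInertia B = Fintype.card {i // hB.eigenvalues i < 0} := by
    rw [negInertia, dif_pos hB]
  set b := hB.eigenvectorBasis with hbdef
  set Fneg : Submodule ℝ (EuclideanSpace ℝ (Fin n)) :=
    Submodule.span ℝ (b '' {i | hB.eigenvalues i < 0}) with hFneg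
  set Fpos : Submodule ℝ (EuclideanSpace ℝ (Fin n)) :=
    Submodule.span ℝ (b '' {i | ¬ hB.eigenvalues i < 0}) with hFpos
  have hFnegrank : Module.finrank ℝ Fneg = Fintype.card {i // hB.eigenvalues i < 0} :=
    finrank_span_image b _
  have hFposrank : Module.finrank ℝ Fpos = Fintype.card {i // ¬ hB.eigenvalues i < 0} :=
    finrank_span_image b _
  have hcards : Fintype.card {i // ¬ hB.eigenvalues i < 0}
      = n - Fintype.card {i // hB.eigenvalues i < 0} := by
    rw [Fintype.card_subtype_compl, Fintype.card_fin]
  have hcardle : Fintype.card {i // hB.eigenvalues i < 0} ≤ n := by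
    simpa using Fintype.card_subtype_le (fun i => hB.eigenvalues i < 0)
  -- W₁ ⊓ Fpos = ⊥
  have hinter1 : W₁ ⊓ Fpos = ⊥ := by
    rw [Submodule.eq_bot_iff]
    intro v hv
    by_contra hv0
    have hlt := h1 v hv.1 hv0
    have hge := qf_nonneg_on_span hB (s := {i | ¬ hB.eigenvalues i < 0})
      (fun i hi => le_of_not_gt hi) hv.2
    linarith
  have hinter2 : W₂ ⊓ Fneg = ⊥ := by
    rw [Submodule.eq_bot_iff]
    intro v hv
    by_contra hv0
    have hlt := h2 v hv.1 hv0
    have hge := qf_nonpos_on_span hB (s := {i | hB.eigenvalues i < 0})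
      (fun i hi => le_of_lt hi) hv.2
    linarith
  have htot : Module.finrank ℝ (EuclideanSpace ℝ (Fin n)) = n := finrank_euclideanSpace_fin
  have hb1 : Module.finrank ℝ W₁ + Module.finrank ℝ Fpos ≤ n := by
    have := Submodule.finrank_sup_add_finrank_inf_eq W₁ Fpos
    rw [hinter1] at this
    have hle : Module.finrank ℝ (W₁ ⊔ Fpos : Submodule ℝ (EuclideanSpace ℝ (Fin n))) ≤ n := by
      have h := Submodule.finrank_le (W₁ ⊔ Fpos)
      rw [htot] at h; exact h
    simp only [finrank_bot, add_zero] at this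
    omega
  have hb2 : Module.finrank ℝ W₂ + Module.finrank ℝ Fneg ≤ n := by
    have := Submodule.finrank_sup_add_finrank_inf_eq W₂ Fneg
    rw [hinter2] at this
    have hle : Module.finrank ℝ (W₂ ⊔ Fneg : Submodule ℝ (EuclideanSpace ℝ (Fin n))) ≤ n := by
      have h := Submodule.finrank_le (W₂ ⊔ Fneg)
      rw [htot] at h; exact h
    simp only [finrank_bot, add_zero] at this
    omega
  rw [hneg]
  omega

/-- extend strict signs from the unit sphere of a submodule to all nonzero vectors -/
private lemma qf_sign_of_sphere {B : Matrix (Fin n) (Fin n) ℝ}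
    {W : Submodule ℝ (EuclideanSpace ℝ (Fin n))} {P : ℝ → Prop}
    (hP : ∀ (c t : ℝ) , 0 < c → P t → P (c * t))
    (h : ∀ v ∈ (W : Set (EuclideanSpace ℝ (Fin n))) ∩ Metric.sphere 0 1,
      P (v ⬝ᵥ B *ᵥ v)) :
    ∀ v ∈ W, v ≠ 0 → P (v ⬝ᵥ B *ᵥ v) := by
  intro v hv hv0
  have hc : (0 : ℝ) < ‖v‖ := norm_pos_iff.mpr hv0
  set u : EuclideanSpace ℝ (Fin n) := ‖v‖⁻¹ • v with hu
  have huW : u ∈ W := W.smul_mem _ hv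
  have hun : ‖u‖ = 1 := by
    rw [hu, norm_smul, norm_inv, norm_norm, inv_mul_cancel₀ (ne_of_gt hc)]
  have husph : u ∈ Metric.sphere (0 : EuclideanSpace ℝ (Fin n)) 1 := by
    simpa [mem_sphere_zero_iff_norm] using hun
  have hval := h u ⟨huW, husph⟩
  have hvu : v = ‖v‖ • u := by
    rw [hu, smul_inv_smul₀ (ne_of_gt hc)]
  have hq : v ⬝ᵥ B *ᵥ v = ‖v‖ ^ 2 * (u ⬝ᵥ B *ᵥ u) := by
    conv_lhs => rw [hvu]
    have : ((‖v‖ • u : EuclideanSpace ℝ (Fin n)) : Fin n → ℝ) = ‖v‖ • (u : Fin n → ℝ) := rfl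
    rw [this, smul_dotProduct, mulVec_smul, dotProduct_smul, smul_eq_mul, smul_eq_mul]
    ring
  rw [hq]
  exact hP _ _ (by positivity) hval

end aux

theorem index_locally_constant_off_spectral_variety (r N : ℕ)
    (Q : (Fin (r + 1) → ℝ) →ₗ[ℝ] Matrix (Fin (N + 1)) (Fin (N + 1)) ℝ)
    (hsymm : ∀ x, (Q x).IsSymm) :
    IsLocallyConstant
      (fun x : {x : Fin (r + 1) → ℝ // (Q x).det ≠ 0} => negInertia (Q x.val)) := by
  classical
  have hH : ∀ y, (Q y).IsHermitian := by
    intro y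
    have hy := hsymm y
    show (Q y)ᴴ = Q y
    ext i j
    have h1 := congrFun (congrFun hy i) j
    simpa using h1
  rw [IsLocallyConstant.iff_eventually_eq]
  rintro ⟨x₀, hdet⟩
  have hA : (Q x₀).IsHermitian := hH x₀
  -- eigenvalues are nonzero
  have hμne : ∀ i, hA.eigenvalues i ≠ 0 := by
    intro i hi
    apply hdet
    rw [hA.det_eq_prod_eigenvalues]
    rw [Finset.prod_eq_zero (Finset.mem_univ i)]
    simpa using hi
  set W₁ : Submodule ℝ (EuclideanSpace ℝ (Fin (N + 1))) :=
    Submodule.span ℝ (hA.eigenvectorBasis '' {i | hA.eigenvalues i < 0}) with hW₁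
  set W₂ : Submodule ℝ (EuclideanSpace ℝ (Fin (N + 1))) :=
    Submodule.span ℝ (hA.eigenvectorBasis '' {i | ¬ hA.eigenvalues i < 0}) with hW₂
  have hdim : Module.finrank ℝ W₁ + Module.finrank ℝ W₂ = N + 1 := by
    rw [hW₁, hW₂, finrank_span_image hA.eigenvectorBasis _,
      finrank_span_image hA.eigenvectorBasis _,
      Fintype.card_subtype_compl, Fintype.card_fin]
    have := Fintype.card_subtype_le (fun i : Fin (N + 1) => hA.eigenvalues i < 0)
    rw [Fintype.card_fin] at this
    omega
  -- signs of the quadratic form of Q x₀ on W₁, W₂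
  have hsign1 : ∀ v ∈ W₁, v ≠ 0 → v ⬝ᵥ (Q x₀) *ᵥ v < 0 := fun v hv hv0 =>
    qf_neg_on_span hA (fun i hi => hi) hv hv0
  have hsign2 : ∀ v ∈ W₂, v ≠ 0 → 0 < v ⬝ᵥ (Q x₀) *ᵥ v := fun v hv hv0 =>
    qf_pos_on_span hA (fun i hi => (hμne i).lt_or_gt.resolve_left (by simpa using hi)) hv hv0
  -- continuity
  have hQcont : Continuous fun x => Q x := Q.continuous_of_finiteDimensional
  have hg : Continuous (fun z : (Fin (r + 1) → ℝ) × EuclideanSpace ℝ (Fin (N + 1)) =>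
      z.2 ⬝ᵥ (Q z.1) *ᵥ z.2) := by
    simp only [dotProduct, mulVec]
    apply continuous_finset_sum
    intro i _
    apply Continuous.mul
    · exact (EuclideanSpace.proj i).continuous.comp continuous_snd
    · apply continuous_finset_sum
      intro j _
      apply Continuous.mul
      · exact ((continuous_apply j).comp ((continuous_apply i).comp
          (hQcont.comp continuous_fst)))
      · exact (EuclideanSpace.proj j).continuous.comp continuous_snd
  -- compact spheres
  have hcompact : ∀ W : Submodule ℝ (EuclideanSpace ℝ (Fin (N + 1))),
      IsCompact ((W : Set (EuclideanSpace ℝ (Fin (N + 1)))) ∩ Metric.sphere 0 1) := by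
    intro W
    exact (isCompact_sphere (0 : EuclideanSpace ℝ (Fin (N + 1))) 1).inter_left
      W.closed_of_finiteDimensional
  have hev1 : ∀ᶠ x in nhds x₀, ∀ v ∈ (W₁ : Set (EuclideanSpace ℝ (Fin (N + 1)))) ∩
      Metric.sphere 0 1, v ⬝ᵥ (Q x) *ᵥ v < 0 := by
    apply (hcompact W₁).eventually_forall_of_forall_eventually
      (P := fun x v => v ⬝ᵥ (Q x) *ᵥ v < 0)
    intro v hv
    have hlt : v ⬝ᵥ (Q x₀) *ᵥ v < 0 := by
      apply hsign1 v hv.1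
      intro h0
      have h2 := hv.2
      rw [h0] at h2
      simp at h2
    exact hg.continuousAt.eventually_lt continuousAt_const hlt
  have hev2 : ∀ᶠ x in nhds x₀, ∀ v ∈ (W₂ : Set (EuclideanSpace ℝ (Fin (N + 1)))) ∩
      Metric.sphere 0 1, 0 < v ⬝ᵥ (Q x) *ᵥ v := by
    apply (hcompact W₂).eventually_forall_of_forall_eventually
      (P := fun x v => 0 < v ⬝ᵥ (Q x) *ᵥ v)
    intro v hv
    have hlt : 0 < v ⬝ᵥ (Q x₀) *ᵥ v := by
      apply hsign2 v hv.1
      intro h0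
      have h2 := hv.2
      rw [h0] at h2
      simp at h2
    exact continuousAt_const.eventually_lt hg.continuousAt hlt
  have heva : ∀ᶠ x in nhds x₀, negInertia (Q x) = Module.finrank ℝ W₁ := by
    filter_upwards [hev1, hev2] with x h1 h2
    refine negInertia_eq_of_spans (hH x) W₁ W₂ ?_ ?_ hdim
    · exact qf_sign_of_sphere (P := fun t => t < 0)
        (fun c t hc ht => by nlinarith) h1
    · exact qf_sign_of_sphere (P := fun t => 0 < t)
        (fun c t hc ht => by nlinarith) h2
  have hx₀ : negInertia (Q x₀) = Module.finrank ℝ W₁ :=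
    negInertia_eq_of_spans hA W₁ W₂ hsign1 hsign2 hdim
  have hev : ∀ᶠ x in nhds x₀, negInertia (Q x) = negInertia (Q x₀) := by
    filter_upwards [heva] with x h1
    rw [h1, hx₀]
  exact (continuous_subtype_val.tendsto (⟨x₀, hdet⟩ : {x : Fin (r + 1) → ℝ // (Q x).det ≠ 0})).eventually hev
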